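/- Let μ be a composition of n. Then the set { m : C^μ_m > 0 } equals { m : s_μ ≤ m ≤ n and m ≡ n (mod 2) }, where s_μ = min{ m : C^μ_m > 0 }. In particular C^μ_n > 0; every m with C^μ_m > 0 satisfies m ≡ n (mod 2); and if C^μ_m > 0 and m + 2 ≤ n then C^μ_{m+2} > 0. -/
import Mathlib


/-- `t` is a walk over the composition `μ` with `m` defects: `0 ≤ t i ≤ μ i`,
every partial sum `∑_{i<j} (μ i − 2 t i)` is at least `t j`, and the total
`∑ i (μ i − 2 t i)` equals `m`. -/
def IsWalk {r : ℕ} (μ : Fin r → ℕ) (m : ℕ) (t : Fin r → ℕ) : Prop :=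
  (∀ i, t i ≤ μ i) ∧
  (∀ j : Fin r, (t j : ℤ) ≤
      ∑ i ∈ Finset.univ.filter (fun i : Fin r => i < j), ((μ i : ℤ) - 2 * (t i : ℤ))) ∧
  (∑ i : Fin r, ((μ i : ℤ) - 2 * (t i : ℤ))) = (m : ℤ)

/-- `C^μ_m`: the number of walks over `μ` with `m` defects. -/
noncomputable def walkCount {r : ℕ} (μ : Fin r → ℕ) (m : ℕ) : ℕ :=
  Nat.card { t : Fin r → ℕ // IsWalk μ m t }

/-- `s_μ`: the minimal number of defects of a walk over `μ`. -/
noncomputable def minDefects {r : ℕ} (μ : Fin r → ℕ) : ℕ :=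
  sInf { m : ℕ | 0 < walkCount μ m }

lemma walk_finite {r : ℕ} (μ : Fin r → ℕ) (m : ℕ) :
    Finite { t : Fin r → ℕ // IsWalk μ m t } := by
  have h : {t : Fin r → ℕ | IsWalk μ m t} ⊆ Set.pi Set.univ (fun i => Set.Iic (μ i)) := by
    intro t ht i _
    exact ht.1 i
  exact (Set.Finite.subset (Set.Finite.pi (fun i => Set.finite_Iic _)) h).to_subtype

lemma walkCount_pos_iff {r : ℕ} (μ : Fin r → ℕ) (m : ℕ) :
    0 < walkCount μ m ↔ ∃ t, IsWalk μ m t := by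
  have := walk_finite μ m
  rw [walkCount, Nat.card_pos_iff]
  constructor
  · rintro ⟨⟨t, ht⟩, -⟩; exact ⟨t, ht⟩
  · rintro ⟨t, ht⟩; exact ⟨⟨⟨t, ht⟩⟩, this⟩

lemma walk_basic {r : ℕ} {μ : Fin r → ℕ} {m : ℕ} {t : Fin r → ℕ} (ht : IsWalk μ m t)
    {n : ℕ} (hn : ∑ i, μ i = n) : m ≤ n ∧ m % 2 = n % 2 ∧ (m:ℤ) = (n:ℤ) - 2 * ∑ i, (t i : ℤ) := by
  have h := ht.2.2
  have h2 : (m:ℤ) = (n:ℤ) - 2 * ∑ i, (t i : ℤ) := by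
    rw [← h, Finset.sum_sub_distrib, ← Finset.mul_sum]
    push_cast [← hn]
    ring
  have h3 : (0:ℤ) ≤ ∑ i, (t i : ℤ) := Finset.sum_nonneg fun i _ => by positivity
  refine ⟨?_, ?_, h2⟩ <;> omega

lemma walk_step {r : ℕ} {μ : Fin r → ℕ} {m : ℕ} {t : Fin r → ℕ} (ht : IsWalk μ m t)
    {j : Fin r} (hj : 0 < t j) : IsWalk μ (m + 2) (Function.update t j (t j - 1)) := by
  set t' := Function.update t j (t j - 1) with ht'
  have hcast : ∀ i, ((μ i : ℤ) - 2 * (t' i : ℤ)) =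
      ((μ i : ℤ) - 2 * (t i : ℤ)) + (if i = j then 2 else 0) := by
    intro i
    by_cases hij : i = j
    · subst hij
      simp only [ht', Function.update_self]
      have : (((t i - 1 : ℕ)) : ℤ) = (t i : ℤ) - 1 := by
        have := hj; omega
      rw [this]; simp; ring
    · simp [ht', Function.update_of_ne hij, hij]
  have hsum : ∀ s : Finset (Fin r),
      ∑ i ∈ s, ((μ i : ℤ) - 2 * (t' i : ℤ)) =
      (∑ i ∈ s, ((μ i : ℤ) - 2 * (t i : ℤ))) + (if j ∈ s then 2 else 0) := by
    intro s
    simp_rw [hcast, Finset.sum_add_distrib, Finset.sum_ite_eq' s j (fun _ => (2:ℤ))]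
  refine ⟨?_, ?_, ?_⟩
  · intro i
    by_cases hij : i = j
    · subst hij; simp only [ht', Function.update_self]; exact le_trans (Nat.sub_le _ _) (ht.1 i)
    · simp only [ht', Function.update_of_ne hij]; exact ht.1 i
  · intro k
    rw [hsum]
    by_cases hk : k = j
    · subst hk
      have hjmem : k ∉ Finset.univ.filter (fun i : Fin r => i < k) := by simp
      rw [if_neg hjmem]
      simp only [ht', Function.update_self]
      have h2 := ht.2.1 k
      have : ((t k - 1 : ℕ) : ℤ) ≤ (t k : ℤ) := by omega
      linarith
    · simp only [ht', Function.update_of_ne hk]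
      have h2 := ht.2.1 k
      split <;> linarith
  · rw [hsum, ht.2.2]
    simp only [Finset.mem_univ, if_true]
    push_cast; ring

/-- For a composition `μ` of `n`, the set `{ m : C^μ_m > 0 }` is exactly
`{ m : s_μ ≤ m ≤ n, m ≡ n (mod 2) }`; in particular `C^μ_n > 0`, every `m` with
`C^μ_m > 0` has the parity of `n`, and `C^μ_m > 0` with `m+2 ≤ n` implies
`C^μ_{m+2} > 0`. -/
theorem walkCount_pos_interval {r : ℕ} (μ : Fin r → ℕ) (n : ℕ) (hn : ∑ i, μ i = n) :
    { m : ℕ | 0 < walkCount μ m }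
        = { m : ℕ | minDefects μ ≤ m ∧ m ≤ n ∧ m % 2 = n % 2 } ∧
    0 < walkCount μ n ∧
    (∀ m, 0 < walkCount μ m → m % 2 = n % 2) ∧
    (∀ m, 0 < walkCount μ m → m + 2 ≤ n → 0 < walkCount μ (m + 2)) := by
  have hwn : 0 < walkCount μ n := by
    rw [walkCount_pos_iff]
    refine ⟨fun _ => 0, fun i => Nat.zero_le _, fun j => ?_, ?_⟩
    · simp only [Nat.cast_zero, mul_zero, sub_zero]
      exact Finset.sum_nonneg fun i _ => by positivity
    · simp [← hn]
  have hstep : ∀ m, 0 < walkCount μ m → m + 2 ≤ n → 0 < walkCount μ (m + 2) := by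
    intro m hm hm2
    rw [walkCount_pos_iff] at hm ⊢
    obtain ⟨t, ht⟩ := hm
    obtain ⟨_, _, heq⟩ := walk_basic ht hn
    have hpos : ∃ j, 0 < t j := by
      by_contra h
      push_neg at h
      have : ∀ i ∈ Finset.univ, (t i : ℤ) = 0 := fun i _ => by
        have := h i; omega
      rw [Finset.sum_congr rfl this] at heq
      simp at heq; omega
    obtain ⟨j, hj⟩ := hpos
    exact ⟨_, walk_step ht hj⟩
  have hpar : ∀ m, 0 < walkCount μ m → m ≤ n ∧ m % 2 = n % 2 := by
    intro m hm
    rw [walkCount_pos_iff] at hm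
    obtain ⟨t, ht⟩ := hm
    obtain ⟨h1, h2, _⟩ := walk_basic ht hn
    exact ⟨h1, h2⟩
  have hne : {m : ℕ | 0 < walkCount μ m}.Nonempty := ⟨n, hwn⟩
  have hsd : 0 < walkCount μ (minDefects μ) := Nat.sInf_mem hne
  have hchain : ∀ k, minDefects μ + 2 * k ≤ n → 0 < walkCount μ (minDefects μ + 2 * k) := by
    intro k
    induction k with
    | zero => intro _; simpa using hsd
    | succ k ih =>
      intro hk
      have h1 : minDefects μ + 2 * k + 2 ≤ n := by omega
      have := hstep _ (ih (by omega)) h1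
      have heq : minDefects μ + 2 * (k + 1) = minDefects μ + 2 * k + 2 := by omega
      rw [heq]; exact this
  refine ⟨?_, hwn, fun m hm => (hpar m hm).2, hstep⟩
  ext m
  simp only [Set.mem_setOf_eq]
  constructor
  · intro hm
    exact ⟨Nat.sInf_le hm, (hpar m hm).1, (hpar m hm).2⟩
  · rintro ⟨hsdm, hmn, hmp⟩
    have hsdpar := (hpar _ hsd).2
    obtain ⟨k, hk⟩ : ∃ k, m = minDefects μ + 2 * k := ⟨(m - minDefects μ)/2, by omega⟩
    rw [hk]
    exact hchain k (by omega)
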